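/- Let X and Y be real normed spaces and f: X → Y a phase-isometry. Let x* ∈ X* be a w*-exposed point of the dual unit ball, i.e., x* is the unique norm-one supporting functional at some smooth point u ∈ X with ‖u‖ = 1. Then there exists φ ∈ Y* with ‖φ‖ = 1 such that for every x ∈ X, x*(x) = φ(f(x)) or x*(x) = −φ(f(x)). -/

import Mathlib

open Filter Topology Set Pointwise

private lemma pair_sum {a b c d : ℝ} (h : ({a, b} : Set ℝ) = {c, d}) : a + b = c + d := by
  have ha : a = c ∨ a = d := by
    have : a ∈ ({a, b} : Set ℝ) := by simp
    rw [h] at this; simpa using this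
  have hb : b = c ∨ b = d := by
    have : b ∈ ({a, b} : Set ℝ) := by simp
    rw [h] at this; simpa using this
  have hc : c = a ∨ c = b := by
    have : c ∈ ({c, d} : Set ℝ) := by simp
    rw [← h] at this; simpa using this
  have hd : d = a ∨ d = b := by
    have : d ∈ ({c, d} : Set ℝ) := by simp
    rw [← h] at this; simpa using this
  rcases ha with h1|h1 <;> rcases hb with h2|h2 <;> rcases hc with h3|h3 <;>
    rcases hd with h4|h4 <;> linarith

private lemma smooth_tendsto {X : Type*} [NormedAddCommGroup X] [NormedSpace ℝ X]
    (u : X) (hu : ‖u‖ = 1) (x' : X →L[ℝ] ℝ) (hx' : ‖x'‖ = 1) (hx'u : x' u = 1)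
    (huniq : ∀ ψ : X →L[ℝ] ℝ, ‖ψ‖ = 1 → ψ u = 1 → ψ = x') (y : X) :
    Tendsto (fun n : ℕ => ‖(n : ℝ) • u + y‖ - n) atTop (𝓝 (x' y)) := by
  set h : ℝ → X → ℝ := fun t z => ‖t • u + z‖ - t with hh
  have hmono : ∀ z : X, ∀ s t : ℝ, s ≤ t → h t z ≤ h s z := by
    intro z s t hst
    have : ‖t • u + z‖ ≤ ‖s • u + z‖ + (t - s) := by
      calc ‖t • u + z‖ = ‖(s • u + z) + (t - s) • u‖ := by
            congr 1; rw [sub_smul]; abel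
        _ ≤ ‖s • u + z‖ + ‖(t - s) • u‖ := norm_add_le _ _
        _ = ‖s • u + z‖ + (t - s) := by
            rw [norm_smul_of_nonneg (by linarith), hu, mul_one]
    simp only [hh]; linarith
  have happ : ∀ (t : ℝ) (z : X), x' (t • u + z) = t + x' z := by
    intro t z; rw [map_add, map_smul, hx'u]; simp
  have hlb : ∀ z : X, ∀ t : ℝ, x' z ≤ h t z := by
    intro z t
    have h1 : x' (t • u + z) ≤ ‖t • u + z‖ := by
      calc x' (t • u + z) ≤ |x' (t • u + z)| := le_abs_self _
        _ ≤ ‖x'‖ * ‖t • u + z‖ := x'.le_opNorm _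
        _ = ‖t • u + z‖ := by rw [hx', one_mul]
    rw [happ] at h1; simp only [hh]; linarith
  set S : X → Set ℝ := fun z => (fun t => h t z) '' Set.Ioi (0 : ℝ) with hS
  have hne : ∀ z, (S z).Nonempty := fun z => ⟨h 1 z, ⟨1, by norm_num, rfl⟩⟩
  have hbdd : ∀ z, BddBelow (S z) := by
    intro z; refine ⟨x' z, ?_⟩; rintro a ⟨t, ht, rfl⟩; exact hlb z t
  set N : X → ℝ := fun z => sInf (S z) with hN
  have hNle : ∀ z, ∀ t : ℝ, 0 < t → N z ≤ h t z := fun z t ht => csInf_le (hbdd z) ⟨t, ht, rfl⟩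
  have hNlb : ∀ z, x' z ≤ N z := fun z => le_csInf (hne z) (by rintro a ⟨t, ht, rfl⟩; exact hlb z t)
  have hNnorm : ∀ z, N z ≤ ‖z‖ := by
    intro z
    refine (hNle z 1 one_pos).trans ?_
    have h2 := norm_add_le ((1:ℝ) • u) z
    rw [norm_smul_of_nonneg zero_le_one, hu] at h2
    simp only [hh]; linarith
  have hNu : N u = 1 := by
    have h1 : ∀ t : ℝ, 0 < t → h t u = 1 := by
      intro t ht
      have he : t • u + u = (t+1) • u := by rw [add_smul, one_smul]
      simp only [hh, he, norm_smul_of_nonneg (by linarith : (0:ℝ) ≤ t+1), hu]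
      ring
    apply le_antisymm
    · have := hNle u 1 one_pos; rw [h1 1 one_pos] at this; exact this
    · apply le_csInf (hne u); rintro a ⟨t, ht, rfl⟩
      rw [Set.mem_Ioi] at ht
      exact le_of_eq (h1 t ht).symm
  have hNnu : N (-u) ≤ -1 := by
    have h2 : h 2 (-u) = -1 := by
      have he : (2:ℝ) • u + -u = (1:ℝ) • u := by
        rw [← sub_eq_add_neg]
        rw [show (2:ℝ) • u - u = (2:ℝ) • u - (1:ℝ) • u by rw [one_smul], ← sub_smul]
        norm_num
      simp only [hh, he, norm_smul_of_nonneg zero_le_one, hu]; norm_num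
    rw [← h2]; exact hNle _ 2 (by norm_num)
  have hNadd : ∀ z w : X, N (z + w) ≤ N z + N w := by
    intro z w
    have key : ∀ a ∈ S z, ∀ b ∈ S w, N (z + w) ≤ a + b := by
      rintro a ⟨t, ht, rfl⟩ b ⟨s, hs, rfl⟩
      rw [Set.mem_Ioi] at ht hs
      refine (hNle _ (t + s) (by positivity)).trans ?_
      have h3 : ‖(t + s) • u + (z + w)‖ ≤ ‖t • u + z‖ + ‖s • u + w‖ := by
        calc ‖(t + s) • u + (z + w)‖ = ‖(t • u + z) + (s • u + w)‖ := by
              rw [add_smul]; congr 1; abel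
          _ ≤ _ := norm_add_le _ _
      simp only [hh]; linarith
    have step1 : ∀ a ∈ S z, N (z + w) - a ≤ N w :=
      fun a ha => le_csInf (hne w) (fun b hb => by linarith [key a ha b hb])
    have step2 : N (z + w) - N w ≤ N z :=
      le_csInf (hne z) (fun a ha => by linarith [step1 a ha])
    linarith
  have hN0 : N 0 = 0 := by
    apply le_antisymm
    · have := hNnorm 0; simpa using this
    · have := hNlb 0; simpa using this
  have hNhom : ∀ c : ℝ, 0 < c → ∀ z : X, N (c • z) = c * N z := by
    intro c hc z
    have hset : S (c • z) = c • (S z) := by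
      rw [← Set.image_smul]
      ext a
      constructor
      · rintro ⟨t, ht, rfl⟩
        rw [Set.mem_Ioi] at ht
        refine ⟨h (t / c) z, ⟨t / c, by rw [Set.mem_Ioi]; positivity, rfl⟩, ?_⟩
        simp only [hh, smul_eq_mul, mul_sub]
        congr 1
        · rw [← norm_smul_of_nonneg hc.le, smul_add, smul_smul]
          congr 2
          field_simp
        · field_simp
      · rintro ⟨a, ⟨t, ht, rfl⟩, rfl⟩
        rw [Set.mem_Ioi] at ht
        refine ⟨c * t, by rw [Set.mem_Ioi]; positivity, ?_⟩
        simp only [hh, smul_eq_mul, mul_sub]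
        rw [← norm_smul_of_nonneg hc.le, smul_add, smul_smul]
    simp only [hN]
    rw [hset, Real.sInf_smul_of_nonneg hc.le, smul_eq_mul]
  -- N = x' via Hahn-Banach and uniqueness
  have hNeq : ∀ z : X, N z = x' z := by
    intro z
    rcases eq_or_ne z 0 with rfl | hz
    · rw [hN0, map_zero]
    · -- build linear functional on span {z}
      have hscale : ∀ c : ℝ, c * N z ≤ N (c • z) := by
        intro c
        rcases lt_trichotomy c 0 with hc | rfl | hc
        · have h4 : N z + N (-z) ≥ 0 := by
            have := hNadd z (-z); rw [add_neg_cancel, hN0] at this; linarith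
          have h5 : N (c • z) = (-c) * N (-z) := by
            rw [show c • z = (-c) • (-z) by rw [smul_neg, neg_smul, neg_neg]]
            exact hNhom (-c) (by linarith) (-z)
          nlinarith
        · simp [hN0]
        · rw [hNhom c hc z]
      set g0 : X →ₗ.[ℝ] ℝ := LinearPMap.mkSpanSingleton z (N z) hz with hg0
      have hbound0 : ∀ w : g0.domain, g0 w ≤ N w := by
        rintro ⟨w, hw⟩
        rcases Submodule.mem_span_singleton.mp hw with ⟨c, rfl⟩
        have h9 : g0 ⟨c • z, hw⟩ = c • N z :=
          LinearPMap.mkSpanSingleton'_apply z (N z) _ c hw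
        rw [h9, smul_eq_mul]
        exact hscale c
      obtain ⟨g, hgext, hgle⟩ := exists_extension_of_le_sublinear g0 N hNhom hNadd hbound0
      · have hgz : g z = N z := by
          have h6 : g0 ⟨z, Submodule.mem_span_singleton_self z⟩ = N z :=
            LinearPMap.mkSpanSingleton_apply ℝ ℝ hz (N z)
          have := hgext ⟨z, Submodule.mem_span_singleton_self z⟩
          rw [h6] at this; exact this
        have hgbound : ∀ w : X, ‖g w‖ ≤ 1 * ‖w‖ := by
          intro w
          rw [one_mul, Real.norm_eq_abs, abs_le]
          constructor
          · have := (hgle (-w)).trans (hNnorm (-w))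
            rw [map_neg, norm_neg] at this; linarith
          · exact (hgle w).trans (hNnorm w)
        set ψ : X →L[ℝ] ℝ := g.mkContinuous 1 hgbound with hψ
        have hψu : ψ u = 1 := by
          have h7 : ψ u ≤ 1 := by
            have := (hgle u).trans_eq hNu
            simpa [hψ, LinearMap.mkContinuous_apply] using this
          have h8 : (1:ℝ) ≤ ψ u := by
            have := (hgle (-u)).trans hNnu
            rw [map_neg] at this
            simp only [hψ, LinearMap.mkContinuous_apply]
            linarith
          linarith
        have hψnorm : ‖ψ‖ = 1 := by
          apply le_antisymm
          · exact g.mkContinuous_norm_le zero_le_one hgbound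
          · have := ψ.le_opNorm u
            rw [hψu, hu, mul_one] at this
            rw [Real.norm_eq_abs, abs_one] at this
            exact this
        rw [← huniq ψ hψnorm hψu]
        exact hgz.symm.trans (by simp [hψ, LinearMap.mkContinuous_apply])
  -- now the limit
  have hanti : Antitone (fun n : ℕ => h n y) := by
    intro m n hmn
    exact hmono y m n (by exact_mod_cast hmn)
  have hbdd2 : BddBelow (Set.range (fun n : ℕ => h n y)) := by
    refine ⟨x' y, ?_⟩; rintro a ⟨n, rfl⟩; exact hlb y n
  have hlim := tendsto_atTop_ciInf hanti hbdd2
  have hinf : ⨅ n : ℕ, h n y = x' y := by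
    rw [← hNeq y]
    apply le_antisymm
    · apply le_csInf (hne y)
      rintro a ⟨t, ht, rfl⟩
      rw [Set.mem_Ioi] at ht
      calc ⨅ n : ℕ, h n y ≤ h (⌈t⌉₊ : ℕ) y := ciInf_le hbdd2 _
        _ ≤ h t y := hmono y t _ (Nat.le_ceil t)
    · apply le_ciInf
      intro n
      calc N y ≤ h ((n:ℝ) + 1) y := hNle y _ (by positivity)
        _ ≤ h n y := hmono y _ _ (by linarith)
  rw [← hinf]
  simpa only [hh] using hlim

private lemma cluster_eq_of_tendsto {v : ℕ → ℝ} {c L : ℝ}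
    (hv : Tendsto v atTop (𝓝 L)) (hc : MapClusterPt c atTop v) : c = L := by
  have h1 : (𝓝 c ⊓ Filter.map v atTop).NeBot := hc
  exact eq_of_nhds_neBot (h1.mono (inf_le_inf_left _ hv))

theorem stmt_6 {X Y : Type*} [NormedAddCommGroup X] [NormedSpace ℝ X]
    [NormedAddCommGroup Y] [NormedSpace ℝ Y] (f : X → Y)
    (hf : ∀ x y : X, ({‖f x + f y‖, ‖f x - f y‖} : Set ℝ) = {‖x + y‖, ‖x - y‖})
    (u : X) (hu : ‖u‖ = 1) (x' : X →L[ℝ] ℝ) (hx' : ‖x'‖ = 1) (hx'u : x' u = 1)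
    (huniq : ∀ ψ : X →L[ℝ] ℝ, ‖ψ‖ = 1 → ψ u = 1 → ψ = x') :
    ∃ φ : Y →L[ℝ] ℝ, ‖φ‖ = 1 ∧ ∀ x : X, x' x = φ (f x) ∨ x' x = -φ (f x) := by
  have hnorm : ∀ x : X, ‖f x‖ = ‖x‖ := by
    intro x
    have h1 := pair_sum (hf x x)
    have e1 : f x + f x = (2:ℝ) • f x := (two_smul ℝ (f x)).symm
    have e2 : x + x = (2:ℝ) • x := (two_smul ℝ x).symm
    rw [e1, e2, sub_self, sub_self, norm_zero, norm_zero, norm_smul_of_nonneg (by norm_num),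
      norm_smul_of_nonneg (by norm_num)] at h1
    linarith
  have hsum : ∀ x y : X, ‖f x + f y‖ + ‖f x - f y‖ = ‖x + y‖ + ‖x - y‖ :=
    fun x y => pair_sum (hf x y)
  have hmem : ∀ x y : X, ‖f x + f y‖ = ‖x + y‖ ∨ ‖f x + f y‖ = ‖x - y‖ := by
    intro x y
    have h1 : ‖f x + f y‖ ∈ ({‖x + y‖, ‖x - y‖} : Set ℝ) := by
      rw [← hf x y]; simp
    simpa using h1
  set v : ℕ → X := fun n => ((n:ℝ)+1) • u with hv
  have hfv : ∀ n : ℕ, ‖f (v n)‖ = (n:ℝ)+1 := by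
    intro n
    rw [hnorm, hv, norm_smul_of_nonneg (by positivity), hu, mul_one]
  have hfv_ne : ∀ n : ℕ, f (v n) ≠ 0 := by
    intro n hzero
    have := hfv n
    rw [hzero, norm_zero] at this
    have : (0:ℝ) < (n:ℝ)+1 := by positivity
    linarith
  choose G hG1 hG2 using fun n : ℕ => exists_dual_vector ℝ (f (v n)) (norm_ne_zero_iff.mpr (hfv_ne n))
  have hGv : ∀ n : ℕ, G n (f (v n)) = (n:ℝ)+1 := by
    intro n
    have h1 := hG2 n
    rw [hfv n] at h1
    exact_mod_cast h1
  have hshift : ∀ y : X, Tendsto (fun n : ℕ => ‖v n + y‖ - ((n:ℝ)+1)) atTop (𝓝 (x' y)) := by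
    intro y
    have h1 := (smooth_tendsto u hu x' hx' hx'u huniq y).comp (tendsto_add_atTop_nat 1)
    have h2 : ((fun n : ℕ => ‖(n:ℝ) • u + y‖ - n) ∘ (fun n : ℕ => n + 1)) =
        fun n : ℕ => ‖v n + y‖ - ((n:ℝ)+1) := by
      funext n
      simp only [Function.comp_apply, hv]
      push_cast
      ring_nf
    rw [h2] at h1
    exact h1
  -- Banach-Alaoglu: cluster point of the dual sequence
  set T : ℕ → WeakDual ℝ Y := fun n => StrongDual.toWeakDual (G n) with hT
  have hK : IsCompact (WeakDual.toStrongDual ⁻¹' Metric.closedBall 0 1) :=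
    WeakDual.isCompact_closedBall (𝕜 := ℝ) (E := Y) 0 1
  have hTK : ∀ n, T n ∈ WeakDual.toStrongDual ⁻¹' Metric.closedBall 0 1 := by
    intro n
    simp only [Set.mem_preimage, Metric.mem_closedBall, dist_zero_right]
    show ‖G n‖ ≤ 1
    exact le_of_eq (hG1 n)
  obtain ⟨φw, hφK, hφclus⟩ := hK.exists_mapClusterPt (f := atTop) (u := T)
    (Filter.tendsto_principal.mpr (Filter.Eventually.of_forall hTK))
  set φ : Y →L[ℝ] ℝ := WeakDual.toStrongDual φw with hφ
  have hφle : ‖φ‖ ≤ 1 := by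
    simpa [Metric.mem_closedBall, dist_zero_right] using hφK
  have key : ∀ x : X, |φ (f x)| = |x' x| := by
    intro x
    set A : ℕ → ℝ := fun n => ‖v n + x‖ - ((n:ℝ)+1) with hA
    set B : ℕ → ℝ := fun n => ‖v n - x‖ - ((n:ℝ)+1) with hB
    have hAt : Tendsto A atTop (𝓝 (x' x)) := hshift x
    have hBt : Tendsto B atTop (𝓝 (-(x' x))) := by
      have h1 := hshift (-x)
      rw [map_neg] at h1
      have h2 : (fun n : ℕ => ‖v n + -x‖ - ((n:ℝ)+1)) = B := by
        funext n; rw [← sub_eq_add_neg]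
      rw [h2] at h1
      exact h1
    set E : ℕ → ℝ := fun n => ‖f (v n) + f x‖ - ((n:ℝ)+1) - G n (f x) with hE
    have hE0 : ∀ n, 0 ≤ E n := by
      intro n
      have h1 : G n (f (v n) + f x) ≤ ‖f (v n) + f x‖ := by
        calc G n (f (v n) + f x) ≤ |G n (f (v n) + f x)| := le_abs_self _
          _ ≤ ‖G n‖ * ‖f (v n) + f x‖ := (G n).le_opNorm _
          _ = _ := by rw [hG1 n, one_mul]
      rw [map_add, hGv n] at h1
      simp only [hE]; linarith
    have hD0 : ∀ n, E n ≤ A n + B n := by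
      intro n
      have h1 : G n (f (v n) - f x) ≤ ‖f (v n) - f x‖ := by
        calc G n (f (v n) - f x) ≤ |G n (f (v n) - f x)| := le_abs_self _
          _ ≤ ‖G n‖ * ‖f (v n) - f x‖ := (G n).le_opNorm _
          _ = _ := by rw [hG1 n, one_mul]
      rw [map_sub, hGv n] at h1
      have h2 := hsum (v n) x
      simp only [hE, hA, hB]; linarith
    have hEt : Tendsto E atTop (𝓝 0) := by
      have hABt : Tendsto (fun n => A n + B n) atTop (𝓝 0) := by
        have h1 := hAt.add hBt
        simpa using h1
      exact squeeze_zero hE0 hD0 hABt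
    have hGt : Tendsto (fun n => |G n (f x)|) atTop (𝓝 (|x' x|)) := by
      have hbound : ∀ n, ‖|G n (f x)| - |x' x|‖ ≤ |A n - x' x| + |B n + x' x| + E n := by
        intro n
        rw [Real.norm_eq_abs]
        have hBpos : (0:ℝ) ≤ |B n + x' x| := abs_nonneg _
        have hApos : (0:ℝ) ≤ |A n - x' x| := abs_nonneg _
        rcases hmem (v n) x with hcase | hcase
        · have hg : G n (f x) = A n - E n := by
            simp only [hE, hA]; rw [hcase]; ring
          have c1 : abs (|G n (f x)| - |x' x|) ≤ |G n (f x) - x' x| :=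
            abs_abs_sub_abs_le_abs_sub _ _
          have c2 : |G n (f x) - x' x| ≤ |A n - x' x| + E n := by
            rw [hg]
            have := abs_add_le (A n - x' x) (-(E n))
            rw [abs_neg, abs_of_nonneg (hE0 n)] at this
            calc |A n - E n - x' x| = |(A n - x' x) + -(E n)| := by ring_nf
              _ ≤ _ := this
          linarith
        · have hg : G n (f x) = B n - E n := by
            simp only [hE, hB]; rw [hcase]; ring
          have c1 : abs (|G n (f x)| - |x' x|) ≤ |G n (f x) - (-(x' x))| := by
            have := abs_abs_sub_abs_le_abs_sub (G n (f x)) (-(x' x))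
            rwa [abs_neg] at this
          have c2 : |G n (f x) - (-(x' x))| ≤ |B n + x' x| + E n := by
            rw [hg]
            have := abs_add_le (B n + x' x) (-(E n))
            rw [abs_neg, abs_of_nonneg (hE0 n)] at this
            calc |B n - E n - -(x' x)| = |(B n + x' x) + -(E n)| := by ring_nf
              _ ≤ _ := this
          linarith
      have h2 : Tendsto (fun n => |A n - x' x| + |B n + x' x| + E n) atTop (𝓝 0) := by
        have t1 : Tendsto (fun n => |A n - x' x|) atTop (𝓝 0) := by
          have := (hAt.sub_const (x' x)).abs
          simpa using this
        have t2 : Tendsto (fun n => |B n + x' x|) atTop (𝓝 0) := by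
          have := (hBt.add_const (x' x)).abs
          simpa using this
        have := (t1.add t2).add hEt
        simpa using this
      have h3 : Tendsto (fun n => |G n (f x)| - |x' x|) atTop (𝓝 0) :=
        squeeze_zero_norm hbound h2
      have h4 := h3.add_const (|x' x|)
      simpa using h4
    have hclx : MapClusterPt (φw (f x)) atTop (fun n => (T n) (f x)) := by
      have hcont : ContinuousAt (fun ψ : WeakDual ℝ Y => ψ (f x)) φw :=
        (WeakDual.eval_continuous (f x)).continuousAt
      exact hφclus.continuousAt_comp hcont
    have habs : MapClusterPt (|φw (f x)|) atTop (fun n => |(T n) (f x)|) :=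
      hclx.continuousAt_comp continuous_abs.continuousAt
    have heq : (fun n => |(T n) (f x)|) = fun n => |G n (f x)| := rfl
    rw [heq] at habs
    exact cluster_eq_of_tendsto hGt habs
  have hφ1 : ‖φ‖ = 1 := by
    apply le_antisymm hφle
    have h1 := key u
    rw [hx'u, abs_one] at h1
    have h2 : |φ (f u)| ≤ ‖φ‖ * ‖f u‖ := φ.le_opNorm _
    rw [hnorm u, hu, mul_one, h1] at h2
    exact h2
  exact ⟨φ, hφ1, fun x => abs_eq_abs.mp (key x).symm⟩
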